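/- Let (X_n) be a Markov chain with transition kernel P on a measurable space S, ψ : S → ℝ bounded, Δ > 0, p ≥ 1 an integer, and L, L², …, L^p linear operators applied to ψ yielding bounded functions. Suppose the one-step expansion E[ψ(X_{n+1}) | X_n] = ψ(X_n) + Σ_{k=1}^{p} (Δ^k / k!) (L^k ψ)(X_n) + ρ_n holds with |E[ρ_n]| ≤ K Δ^{p+1}, and similarly for each of L ψ, …, L^{p-1} ψ in place of ψ (with correspondingly truncated expansions and error O(Δ^{p+2-k}) for L^{k-1}ψ). If moreover Lψ = φ - φ̄ for a bounded φ and real φ̄, then | (1/N) Σ_{n=0}^{N-1} E[φ(X_n)] - φ̄ | ≤ C ( Δ^p + 1/(NΔ) ) for a constant C independent of Δ and N. -/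

import Mathlib

open MeasureTheory

theorem higher_order_bias_estimate {Ω S : Type*} {m : MeasurableSpace Ω}
    [MeasurableSpace S] (μ : Measure Ω) [IsProbabilityMeasure μ]
    (F : ℝ → Filtration ℕ m) (X : ℝ → ℕ → Ω → S)
    (hXmeas : ∀ Δ n, Measurable (X Δ n))
    (p : ℕ) (hp : 1 ≤ p)
    (Lψ : ℕ → S → ℝ) (hLmeas : ∀ j ≤ p, Measurable (Lψ j))
    (φ : S → ℝ) (hφmeas : Measurable φ) (φbar : ℝ)
    (Cb : ℝ) (hbdd : ∀ j ≤ p, ∀ x, |Lψ j x| ≤ Cb)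
    (hφbdd : ∀ x, |φ x| ≤ Cb)
    (hPoisson : Lψ 1 = fun x => φ x - φbar)
    (K : ℝ) (hK : 0 < K)
    (ρ : ℝ → ℕ → ℕ → Ω → ℝ)
    (hexp : ∀ Δ : ℝ, 0 < Δ → Δ < 1 → ∀ j ≤ p - 1, ∀ n : ℕ,
      μ[fun ω => Lψ j (X Δ (n + 1) ω) | (F Δ) n] =ᵐ[μ]
        fun ω => Lψ j (X Δ n ω) +
          (∑ k ∈ Finset.Icc 1 (p - j),
            Δ ^ k / (Nat.factorial k : ℝ) * Lψ (j + k) (X Δ n ω)) +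
          ρ Δ j n ω)
    (hρ : ∀ Δ : ℝ, 0 < Δ → Δ < 1 → ∀ j ≤ p - 1, ∀ n : ℕ,
      |∫ ω, ρ Δ j n ω ∂μ| ≤ K * Δ ^ (p + 1 - j)) :
    ∃ C : ℝ, ∀ Δ : ℝ, 0 < Δ → Δ < 1 → ∀ N : ℕ, 1 ≤ N →
      |(N : ℝ)⁻¹ * (∑ n ∈ Finset.range N, ∫ ω, φ (X Δ n ω) ∂μ) - φbar| ≤
        C * (Δ ^ p + 1 / ((N : ℝ) * Δ)) := by
  classical
  set Sm : ℝ → ℕ → ℕ → ℝ :=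
    fun Δ N j => ∑ n ∈ Finset.range N, ∫ ω, Lψ j (X Δ n ω) ∂μ with hSmdef
  -- Cb is nonnegative
  have hΩne : Nonempty Ω := by
    by_contra h
    rw [not_nonempty_iff] at h
    have := measure_univ (μ := μ)
    simp [Set.univ_eq_empty_iff.2 h] at this
  obtain ⟨ω₀⟩ := hΩne
  have hCb : 0 ≤ Cb := le_trans (abs_nonneg _) (hbdd 0 (Nat.zero_le p) (X 1 0 ω₀))
  -- integrability
  have hint : ∀ (Δ : ℝ) (n : ℕ), ∀ j ≤ p, Integrable (fun ω => Lψ j (X Δ n ω)) μ := by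
    intro Δ n j hj
    refine (integrable_const Cb).mono'
      (((hLmeas j hj).comp (hXmeas Δ n)).aestronglyMeasurable) ?_
    exact ae_of_all μ fun ω => by
      simpa [Real.norm_eq_abs] using hbdd j hj (X Δ n ω)
  -- uniform bound on the integrals
  have hIbd : ∀ (Δ : ℝ) (n : ℕ), ∀ j ≤ p, |∫ ω, Lψ j (X Δ n ω) ∂μ| ≤ Cb := by
    intro Δ n j hj
    have := norm_integral_le_of_norm_le_const (μ := μ)
      (f := fun ω => Lψ j (X Δ n ω)) (C := Cb)
      (ae_of_all μ fun ω => by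
        simpa [Real.norm_eq_abs] using hbdd j hj (X Δ n ω))
    simpa [Real.norm_eq_abs] using this
  -- one-step identity for the integrals
  have key : ∀ Δ : ℝ, 0 < Δ → Δ < 1 → ∀ j ≤ p - 1, ∀ n : ℕ,
      ∫ ω, Lψ j (X Δ (n + 1) ω) ∂μ =
        (∫ ω, Lψ j (X Δ n ω) ∂μ) +
        (∑ k ∈ Finset.Icc 1 (p - j),
          Δ ^ k / (Nat.factorial k : ℝ) * ∫ ω, Lψ (j + k) (X Δ n ω) ∂μ) +
        ∫ ω, ρ Δ j n ω ∂μ := by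
    intro Δ hΔ hΔ1 j hj n
    have hjp : j ≤ p := le_trans hj (Nat.sub_le p 1)
    set g : Ω → ℝ := fun ω => Lψ j (X Δ n ω) +
      ∑ k ∈ Finset.Icc 1 (p - j),
        Δ ^ k / (Nat.factorial k : ℝ) * Lψ (j + k) (X Δ n ω) with hg
    have hjk : ∀ k ∈ Finset.Icc 1 (p - j), j + k ≤ p := by
      intro k hk
      simp only [Finset.mem_Icc] at hk
      omega
    have hgint : Integrable g μ := by
      refine (hint Δ n j hjp).add ?_
      refine integrable_finset_sum _ fun k hk => ?_
      exact ((hint Δ n (j + k) (hjk k hk))).const_mul _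
    have htot : Integrable (fun ω => g ω + ρ Δ j n ω) μ :=
      integrable_condExp.congr (hexp Δ hΔ hΔ1 j hj n)
    have hρint : Integrable (ρ Δ j n) μ := by
      have h2 := htot.sub hgint
      have he : ((fun ω => g ω + ρ Δ j n ω) - g) = ρ Δ j n := by
        funext ω; simp [Pi.sub_apply]
      rwa [he] at h2
    calc ∫ ω, Lψ j (X Δ (n + 1) ω) ∂μ
        = ∫ ω, (μ[fun ω => Lψ j (X Δ (n + 1) ω) | (F Δ) n]) ω ∂μ :=
          (integral_condExp ((F Δ).le n)).symm
      _ = ∫ ω, (g ω + ρ Δ j n ω) ∂μ := integral_congr_ae (hexp Δ hΔ hΔ1 j hj n)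
      _ = (∫ ω, g ω ∂μ) + ∫ ω, ρ Δ j n ω ∂μ := integral_add hgint hρint
      _ = (∫ ω, Lψ j (X Δ n ω) ∂μ) +
          (∑ k ∈ Finset.Icc 1 (p - j),
            Δ ^ k / (Nat.factorial k : ℝ) * ∫ ω, Lψ (j + k) (X Δ n ω) ∂μ) +
          ∫ ω, ρ Δ j n ω ∂μ := by
          rw [hg, integral_add (hint Δ n j hjp)
            (integrable_finset_sum _ fun k hk => ((hint Δ n (j + k) (hjk k hk))).const_mul _),
            integral_finset_sum _ fun k hk => ((hint Δ n (j + k) (hjk k hk))).const_mul _]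
          simp_rw [integral_const_mul]
  -- summed (telescoped) identity
  have sumkey : ∀ Δ : ℝ, 0 < Δ → Δ < 1 → ∀ N : ℕ, ∀ j ≤ p - 1,
      ∑ k ∈ Finset.Icc 1 (p - j), Δ ^ k / (Nat.factorial k : ℝ) * Sm Δ N (j + k)
        = (∫ ω, Lψ j (X Δ N ω) ∂μ) - (∫ ω, Lψ j (X Δ 0 ω) ∂μ)
          - ∑ n ∈ Finset.range N, ∫ ω, ρ Δ j n ω ∂μ := by
    intro Δ hΔ hΔ1 N j hj
    have tele := Finset.sum_range_sub (fun n => ∫ ω, Lψ j (X Δ n ω) ∂μ) N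
    have congr1 : ∀ n ∈ Finset.range N,
        (∫ ω, Lψ j (X Δ (n + 1) ω) ∂μ) - (∫ ω, Lψ j (X Δ n ω) ∂μ)
          = (∑ k ∈ Finset.Icc 1 (p - j),
              Δ ^ k / (Nat.factorial k : ℝ) * ∫ ω, Lψ (j + k) (X Δ n ω) ∂μ)
            + ∫ ω, ρ Δ j n ω ∂μ := by
      intro n _
      rw [key Δ hΔ hΔ1 j hj n]
      ring
    rw [Finset.sum_congr rfl congr1, Finset.sum_add_distrib] at tele
    have swap : ∑ n ∈ Finset.range N, ∑ k ∈ Finset.Icc 1 (p - j),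
        Δ ^ k / (Nat.factorial k : ℝ) * ∫ ω, Lψ (j + k) (X Δ n ω) ∂μ
        = ∑ k ∈ Finset.Icc 1 (p - j), Δ ^ k / (Nat.factorial k : ℝ) * Sm Δ N (j + k) := by
      rw [Finset.sum_comm]
      exact Finset.sum_congr rfl fun k _ => (Finset.mul_sum _ _ _).symm
    rw [swap] at tele
    linarith [tele]
  -- the key recursive estimate
  have helper : ∀ Δ : ℝ, 0 < Δ → Δ < 1 → ∀ N : ℕ, 1 ≤ N → ∀ j : ℕ, 1 ≤ j → j ≤ p →
      ∀ B : ℝ, 0 ≤ B →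
      (∀ k ∈ Finset.Icc 2 (p - (j - 1)),
        |Sm Δ N (j - 1 + k)| ≤ B * ((N : ℝ) * Δ ^ (p + 2 - j - k) + 1 / Δ)) →
      |Sm Δ N j| ≤ (2 * Cb + K + (p : ℝ) * B) * ((N : ℝ) * Δ ^ (p + 1 - j) + 1 / Δ) := by
    intro Δ hΔ hΔ1 N hN j hj1 hjp B hB Hrec
    have hj0 : j - 1 ≤ p - 1 := by omega
    have E := sumkey Δ hΔ hΔ1 N (j - 1) hj0
    have h1mem : 1 ∈ Finset.Icc 1 (p - (j - 1)) := by
      simp only [Finset.mem_Icc]; omega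
    have hIoc : Finset.Icc 2 (p - (j - 1)) = Finset.Ioc 1 (p - (j - 1)) := by
      rw [← Finset.Icc_add_one_left_eq_Ioc]
      rfl
    have hsum : ∑ k ∈ Finset.Icc 1 (p - (j - 1)),
          Δ ^ k / (Nat.factorial k : ℝ) * Sm Δ N (j - 1 + k)
        = Δ ^ 1 / (Nat.factorial 1 : ℝ) * Sm Δ N (j - 1 + 1)
          + ∑ k ∈ Finset.Ioc 1 (p - (j - 1)),
              Δ ^ k / (Nat.factorial k : ℝ) * Sm Δ N (j - 1 + k) := by
      rw [← Finset.Icc_erase_left]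
      exact (Finset.add_sum_erase _ _ h1mem).symm
    have hf1 : Δ ^ 1 / (Nat.factorial 1 : ℝ) * Sm Δ N (j - 1 + 1) = Δ * Sm Δ N j := by
      simp [Nat.sub_add_cancel hj1]
    have eqΔ : Δ * Sm Δ N j
        = ((∫ ω, Lψ (j - 1) (X Δ N ω) ∂μ) - (∫ ω, Lψ (j - 1) (X Δ 0 ω) ∂μ)
            - ∑ n ∈ Finset.range N, ∫ ω, ρ Δ (j - 1) n ω ∂μ)
          - ∑ k ∈ Finset.Ioc 1 (p - (j - 1)),
              Δ ^ k / (Nat.factorial k : ℝ) * Sm Δ N (j - 1 + k) := by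
      rw [← hf1]; rw [hsum] at E; linarith [E]
    have ha := hIbd Δ N (j - 1) (by omega)
    have hb := hIbd Δ 0 (j - 1) (by omega)
    have hrr : |∑ n ∈ Finset.range N, ∫ ω, ρ Δ (j - 1) n ω ∂μ|
        ≤ (N : ℝ) * (K * Δ ^ (p + 2 - j)) := by
      have e : p + 1 - (j - 1) = p + 2 - j := by omega
      calc |∑ n ∈ Finset.range N, ∫ ω, ρ Δ (j - 1) n ω ∂μ|
          ≤ ∑ n ∈ Finset.range N, |∫ ω, ρ Δ (j - 1) n ω ∂μ| :=
            Finset.abs_sum_le_sum_abs _ _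
        _ ≤ (Finset.range N).card • (K * Δ ^ (p + 2 - j)) := by
            refine Finset.sum_le_card_nsmul _ _ _ fun n _ => ?_
            have h := hρ Δ hΔ hΔ1 (j - 1) hj0 n
            rwa [e] at h
        _ = (N : ℝ) * (K * Δ ^ (p + 2 - j)) := by
            simp [nsmul_eq_mul]
    have hterm : ∀ k ∈ Finset.Ioc 1 (p - (j - 1)),
        |Δ ^ k / (Nat.factorial k : ℝ) * Sm Δ N (j - 1 + k)|
          ≤ B * ((N : ℝ) * Δ ^ (p + 2 - j) + 1) := by
      intro k hk
      simp only [Finset.mem_Ioc] at hk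
      have hrec := Hrec k (by rw [hIoc]; simp only [Finset.mem_Ioc]; exact hk)
      have hpow : (0 : ℝ) < Δ ^ k := pow_pos hΔ k
      have hcoef : |Δ ^ k / (Nat.factorial k : ℝ)| ≤ Δ ^ k := by
        rw [abs_of_nonneg (by positivity)]
        refine div_le_self hpow.le ?_
        exact_mod_cast Nat.one_le_iff_ne_zero.mpr k.factorial_pos.ne'
      have e1 : Δ ^ k * Δ ^ (p + 2 - j - k) = Δ ^ (p + 2 - j) := by
        rw [← pow_add]; congr 1; omega
      have e2 : Δ ^ k * (1 / Δ) = Δ ^ (k - 1) := by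
        rw [show k = (k - 1) + 1 by omega, pow_succ]
        field_simp
        simp
      calc |Δ ^ k / (Nat.factorial k : ℝ) * Sm Δ N (j - 1 + k)|
          = |Δ ^ k / (Nat.factorial k : ℝ)| * |Sm Δ N (j - 1 + k)| := abs_mul _ _
        _ ≤ Δ ^ k * (B * ((N : ℝ) * Δ ^ (p + 2 - j - k) + 1 / Δ)) :=
            mul_le_mul hcoef hrec (abs_nonneg _) hpow.le
        _ = B * ((N : ℝ) * (Δ ^ k * Δ ^ (p + 2 - j - k)) + Δ ^ k * (1 / Δ)) := by ring
        _ = B * ((N : ℝ) * Δ ^ (p + 2 - j) + Δ ^ (k - 1)) := by rw [e1, e2]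
        _ ≤ B * ((N : ℝ) * Δ ^ (p + 2 - j) + 1) := by
            have h1 : Δ ^ (k - 1) ≤ 1 := pow_le_one₀ hΔ.le hΔ1.le
            have hx : (0 : ℝ) ≤ (N : ℝ) * Δ ^ (p + 2 - j) := by positivity
            nlinarith
    have hsumb : |∑ k ∈ Finset.Ioc 1 (p - (j - 1)),
          Δ ^ k / (Nat.factorial k : ℝ) * Sm Δ N (j - 1 + k)|
        ≤ (p : ℝ) * (B * ((N : ℝ) * Δ ^ (p + 2 - j) + 1)) := by
      calc |∑ k ∈ Finset.Ioc 1 (p - (j - 1)),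
            Δ ^ k / (Nat.factorial k : ℝ) * Sm Δ N (j - 1 + k)|
          ≤ ∑ k ∈ Finset.Ioc 1 (p - (j - 1)),
              |Δ ^ k / (Nat.factorial k : ℝ) * Sm Δ N (j - 1 + k)| :=
            Finset.abs_sum_le_sum_abs _ _
        _ ≤ (Finset.Ioc 1 (p - (j - 1))).card • (B * ((N : ℝ) * Δ ^ (p + 2 - j) + 1)) :=
            Finset.sum_le_card_nsmul _ _ _ hterm
        _ ≤ (p : ℝ) * (B * ((N : ℝ) * Δ ^ (p + 2 - j) + 1)) := by
            rw [nsmul_eq_mul]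
            have hcard : (Finset.Ioc 1 (p - (j - 1))).card ≤ p := by
              rw [Nat.card_Ioc]; omega
            have hpos : (0 : ℝ) ≤ B * ((N : ℝ) * Δ ^ (p + 2 - j) + 1) := by positivity
            exact mul_le_mul_of_nonneg_right (by exact_mod_cast hcard) hpos
    have habs : Δ * |Sm Δ N j|
        ≤ 2 * Cb + (N : ℝ) * (K * Δ ^ (p + 2 - j))
          + (p : ℝ) * (B * ((N : ℝ) * Δ ^ (p + 2 - j) + 1)) := by
      have h0 : Δ * |Sm Δ N j| = |Δ * Sm Δ N j| := by
        rw [abs_mul, abs_of_pos hΔ]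
      rw [h0, eqΔ]
      obtain ⟨ha1, ha2⟩ := abs_le.mp ha
      obtain ⟨hb1, hb2⟩ := abs_le.mp hb
      obtain ⟨hr1, hr2⟩ := abs_le.mp hrr
      obtain ⟨hs1, hs2⟩ := abs_le.mp hsumb
      rw [abs_le]
      constructor <;> linarith
    rw [← mul_le_mul_iff_of_pos_left hΔ]
    have hT : Δ * ((2 * Cb + K + (p : ℝ) * B) * ((N : ℝ) * Δ ^ (p + 1 - j) + 1 / Δ))
        = (2 * Cb + K + (p : ℝ) * B) * ((N : ℝ) * Δ ^ (p + 2 - j) + 1) := by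
      have e3 : Δ ^ (p + 2 - j) = Δ ^ (p + 1 - j) * Δ := by
        rw [← pow_succ]; congr 1; omega
      have e4 : Δ * (1 / Δ) = 1 := by field_simp
      rw [e3]
      calc Δ * ((2 * Cb + K + (p : ℝ) * B) * ((N : ℝ) * Δ ^ (p + 1 - j) + 1 / Δ))
          = (2 * Cb + K + (p : ℝ) * B) * ((N : ℝ) * (Δ ^ (p + 1 - j) * Δ) + Δ * (1 / Δ)) := by
            ring
        _ = (2 * Cb + K + (p : ℝ) * B) * ((N : ℝ) * (Δ ^ (p + 1 - j) * Δ) + 1) := by rw [e4]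
    rw [hT]
    have hx : (0 : ℝ) ≤ (N : ℝ) * Δ ^ (p + 2 - j) := by positivity
    nlinarith [mul_nonneg hCb hx, hK.le]
  -- backward induction on p - j
  have main : ∀ d : ℕ, ∃ B : ℝ, 0 ≤ B ∧ ∀ Δ : ℝ, 0 < Δ → Δ < 1 → ∀ N : ℕ, 1 ≤ N →
      ∀ j : ℕ, 1 ≤ j → j ≤ p → p - j ≤ d →
      |Sm Δ N j| ≤ B * ((N : ℝ) * Δ ^ (p + 1 - j) + 1 / Δ) := by
    intro d
    induction d with
    | zero =>
      refine ⟨2 * Cb + K + (p : ℝ) * 0, by positivity, ?_⟩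
      intro Δ hΔ hΔ1 N hN j hj1 hjp hd
      refine helper Δ hΔ hΔ1 N hN j hj1 hjp 0 le_rfl ?_
      intro k hk
      exfalso
      simp only [Finset.mem_Icc] at hk
      omega
    | succ d IH =>
      obtain ⟨B, hB0, hB⟩ := IH
      refine ⟨2 * Cb + K + (p : ℝ) * B, by positivity, ?_⟩
      intro Δ hΔ hΔ1 N hN j hj1 hjp hd
      refine helper Δ hΔ hΔ1 N hN j hj1 hjp B hB0 ?_
      intro k hk
      simp only [Finset.mem_Icc] at hk
      have h := hB Δ hΔ hΔ1 N hN (j - 1 + k) (by omega) (by omega) (by omega)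
      have e : p + 1 - (j - 1 + k) = p + 2 - j - k := by omega
      rwa [e] at h
  obtain ⟨B, hB0, hB⟩ := main p
  refine ⟨B, ?_⟩
  intro Δ hΔ hΔ1 N hN
  have hN0 : (N : ℝ) ≠ 0 := Nat.cast_ne_zero.mpr (by omega)
  have h1 := hB Δ hΔ hΔ1 N hN 1 le_rfl hp (Nat.sub_le p 1)
  rw [show p + 1 - 1 = p from by omega] at h1
  -- identify Sm Δ N 1 with the quantity of interest
  have hφint : ∀ n : ℕ, Integrable (fun ω => φ (X Δ n ω)) μ := by
    intro n
    refine (integrable_const Cb).mono'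
      ((hφmeas.comp (hXmeas Δ n)).aestronglyMeasurable) ?_
    exact ae_of_all μ fun ω => by
      simpa [Real.norm_eq_abs] using hφbdd (X Δ n ω)
  have hSm1 : Sm Δ N 1 = (∑ n ∈ Finset.range N, ∫ ω, φ (X Δ n ω) ∂μ) - (N : ℝ) * φbar := by
    rw [hSmdef]
    simp only [hPoisson]
    have : ∀ n ∈ Finset.range N,
        (∫ ω, (φ (X Δ n ω) - φbar) ∂μ) = (∫ ω, φ (X Δ n ω) ∂μ) - φbar := by
      intro n _
      rw [integral_sub (hφint n) (integrable_const φbar)]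
      simp
    rw [Finset.sum_congr rfl this, Finset.sum_sub_distrib]
    simp [mul_comm]
  have htarget : (N : ℝ)⁻¹ * (∑ n ∈ Finset.range N, ∫ ω, φ (X Δ n ω) ∂μ) - φbar
      = (N : ℝ)⁻¹ * Sm Δ N 1 := by
    rw [hSm1]
    field_simp
  rw [htarget, abs_mul, abs_of_nonneg (by positivity : (0:ℝ) ≤ (N:ℝ)⁻¹)]
  have step : (N : ℝ)⁻¹ * |Sm Δ N 1| ≤ (N : ℝ)⁻¹ * (B * ((N : ℝ) * Δ ^ p + 1 / Δ)) :=
    mul_le_mul_of_nonneg_left h1 (by positivity)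
  refine step.trans (le_of_eq ?_)
  have e : ((N : ℝ))⁻¹ * (N : ℝ) = 1 := inv_mul_cancel₀ hN0
  calc (N : ℝ)⁻¹ * (B * ((N : ℝ) * Δ ^ p + 1 / Δ))
      = B * (((N : ℝ)⁻¹ * (N : ℝ)) * Δ ^ p + (N : ℝ)⁻¹ * (1 / Δ)) := by ring
    _ = B * (Δ ^ p + 1 / ((N : ℝ) * Δ)) := by
        rw [e, one_mul, one_div, one_div, mul_inv]
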